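/- For any z ∈ ℂ and k = 0,…,5, the function u(r) = D_l exp(i e^{iπk/3} z r) satisfies the sixth-order equation (T_l)³ u = z⁶ u on (0,∞). -/

import Mathlib

open Complex

/-- The operator `D_l w (r) = r^{l+1} ((1/r) d/dr)^l (w(r)/r)`. -/
noncomputable def Dop (l : ℕ) (w : ℝ → ℂ) : ℝ → ℂ :=
  fun r => (r : ℂ) ^ (l + 1) *
    ((fun f : ℝ → ℂ => fun r => (r : ℂ)⁻¹ * deriv f r)^[l] (fun r => w r / r)) r

/-- The operator `T_l u = -u'' + l(l+1)/r² u`. -/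
noncomputable def Tl (l : ℕ) (u : ℝ → ℂ) : ℝ → ℂ :=
  fun r => -(deriv (deriv u) r) + ((l : ℂ) * (l + 1) / (r : ℂ) ^ 2) * u r

open Finset

/-! ### Coefficients -/

noncomputable def acoef : ℕ → ℕ → ℂ
  | 0, 0 => 1
  | 0, _+1 => 0
  | l+1, 0 => -(2*(l:ℂ)+1) * acoef l 0
  | l+1, j+1 => acoef l j + ((j:ℂ) - 2*l) * acoef l (j+1)

lemma acoef_vanish : ∀ l j : ℕ, l < j → acoef l j = 0 := by
  intro l
  induction l with
  | zero => intro j hj; match j, hj with | (j+1), _ => rfl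
  | succ l ih =>
    intro j hj
    match j, hj with
    | (j+1), hj =>
      rw [acoef, ih j (by omega), ih (j+1) (by omega)]
      ring

lemma acoef_rel : ∀ l j : ℕ, ((j:ℂ)+1) * ((j:ℂ) - 2*l) * acoef l (j+1) = -2*((j:ℂ)-l) * acoef l j := by
  intro l
  induction l with
  | zero =>
    intro j
    cases j with
    | zero => simp [acoef]
    | succ j =>
      rw [acoef_vanish 0 (j+2) (by omega), acoef_vanish 0 (j+1) (by omega)]
      ring
  | succ l ih =>
    intro j
    cases j with
    | zero =>
      have h0 := ih 0
      rw [show (0:ℕ)+1 = 1 from rfl, acoef, acoef]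
      push_cast
      push_cast at h0
      linear_combination (-(2:ℂ)*l - 2) * h0
    | succ j =>
      have h1 := ih (j+1)
      have h2 := ih j
      rw [acoef, acoef]
      push_cast
      push_cast at h1 h2
      linear_combination ((j:ℂ) + 1 - 2*l - 2) * h1 + h2

/-! ### Derivative helpers -/

lemma hasDerivAt_zpowR (e : ℤ) {r : ℝ} (hr : r ≠ 0) :
    HasDerivAt (fun r : ℝ => (r:ℂ)^e) ((e:ℂ) * (r:ℂ)^(e-1)) r :=
  (hasDerivAt_zpow e (r:ℂ) (Or.inl (by exact_mod_cast hr))).comp_ofReal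

lemma hasDerivAt_cexpc (c : ℂ) (r : ℝ) :
    HasDerivAt (fun r : ℝ => Complex.exp (c * r)) (c * Complex.exp (c * r)) r := by
  have h : HasDerivAt (fun y : ℂ => Complex.exp (c * y)) (c * Complex.exp (c * r)) (r:ℂ) := by
    simpa [mul_comm] using (((hasDerivAt_id ((r:ℝ):ℂ)).const_mul c).cexp)
  exact h.comp_ofReal

lemma hasDerivAt_expsum (c : ℂ) (n : ℕ) (b : ℕ → ℂ) (e : ℕ → ℤ) {r : ℝ} (hr : r ≠ 0) :
    HasDerivAt (fun r : ℝ => Complex.exp (c*r) * ∑ j ∈ range n, b j * (r:ℂ)^(e j))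
      (Complex.exp (c*r) * ∑ j ∈ range n,
        b j * (c * (r:ℂ)^(e j) + ((e j : ℤ) : ℂ) * (r:ℂ)^(e j - 1))) r := by
  have hs : HasDerivAt (fun r : ℝ => ∑ j ∈ range n, b j * (r:ℂ)^(e j))
      (∑ j ∈ range n, b j * (((e j : ℤ):ℂ) * (r:ℂ)^(e j - 1))) r :=
    HasDerivAt.fun_sum fun j _ => (hasDerivAt_zpowR (e j) hr).const_mul (b j)
  have h := (hasDerivAt_cexpc c r).fun_mul hs
  refine h.congr_deriv ?_
  rw [Finset.mul_sum, Finset.mul_sum, Finset.mul_sum, ← Finset.sum_add_distrib]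
  exact Finset.sum_congr rfl fun j _ => by ring

lemma hasDerivAt_expsum2 (c : ℂ) (n : ℕ) (b1 b2 : ℕ → ℂ) (e1 e2 : ℕ → ℤ) {r : ℝ} (hr : r ≠ 0) :
    HasDerivAt (fun r : ℝ => Complex.exp (c*r) * ∑ j ∈ range n,
        (b1 j * (r:ℂ)^(e1 j) + b2 j * (r:ℂ)^(e2 j)))
      (Complex.exp (c*r) * ∑ j ∈ range n,
        (b1 j * (c * (r:ℂ)^(e1 j) + ((e1 j : ℤ) : ℂ) * (r:ℂ)^(e1 j - 1))
          + b2 j * (c * (r:ℂ)^(e2 j) + ((e2 j : ℤ) : ℂ) * (r:ℂ)^(e2 j - 1)))) r := by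
  have hs : HasDerivAt (fun r : ℝ => ∑ j ∈ range n, (b1 j * (r:ℂ)^(e1 j) + b2 j * (r:ℂ)^(e2 j)))
      (∑ j ∈ range n, (b1 j * (((e1 j : ℤ):ℂ) * (r:ℂ)^(e1 j - 1))
        + b2 j * (((e2 j : ℤ):ℂ) * (r:ℂ)^(e2 j - 1)))) r :=
    HasDerivAt.fun_sum fun j _ =>
      ((hasDerivAt_zpowR (e1 j) hr).const_mul (b1 j)).add
        ((hasDerivAt_zpowR (e2 j) hr).const_mul (b2 j))
  have h := (hasDerivAt_cexpc c r).fun_mul hs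
  refine h.congr_deriv ?_
  rw [Finset.mul_sum, Finset.mul_sum, Finset.mul_sum, ← Finset.sum_add_distrib]
  exact Finset.sum_congr rfl fun j _ => by ring

/-! ### Step A : formula for the iterate -/

lemma stepA (c : ℂ) {R : ℂ} (hR : R ≠ 0) (l : ℕ) :
    R⁻¹ * ∑ j ∈ range (l+1), acoef l j * c^j *
        (c * R^((j:ℤ)-2*(l:ℤ)-1) + (((j:ℤ)-2*(l:ℤ)-1 : ℤ):ℂ) * R^((j:ℤ)-2*(l:ℤ)-1-1))
      = ∑ j ∈ range (l+1+1), acoef (l+1) j * c^j * R^((j:ℤ)-2*((l+1:ℕ):ℤ)-1) := by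
  set P : ℕ → ℂ := fun j => acoef l j * c^(j+1) * R^((j:ℤ)-2*(l:ℤ)-2) with hP
  set Q : ℕ → ℂ := fun j => ((j:ℂ)-2*l-1) * acoef l j * c^j * R^((j:ℤ)-2*(l:ℤ)-3) with hQ
  set W : ℕ → ℂ := fun j => ((j:ℂ)-2*l) * acoef l (j+1) * c^(j+1) * R^((j:ℤ)-2*(l:ℤ)-2) with hW
  have hLHS : R⁻¹ * ∑ j ∈ range (l+1), acoef l j * c^j *
        (c * R^((j:ℤ)-2*(l:ℤ)-1) + (((j:ℤ)-2*(l:ℤ)-1 : ℤ):ℂ) * R^((j:ℤ)-2*(l:ℤ)-1-1))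
      = ∑ j ∈ range (l+1), (P j + Q j) := by
    rw [Finset.mul_sum]
    refine Finset.sum_congr rfl fun j _ => ?_
    simp only [hP, hQ]
    rw [show (j:ℤ)-2*(l:ℤ)-1 = ((j:ℤ)-2*(l:ℤ)-2)+1 by ring,
        show (j:ℤ)-2*(l:ℤ)-2+1-1 = ((j:ℤ)-2*(l:ℤ)-3)+1 by ring,
        zpow_add_one₀ hR, zpow_add_one₀ hR]
    push_cast
    field_simp
    ring
  have hRHS : ∑ j ∈ range (l+1+1), acoef (l+1) j * c^j * R^((j:ℤ)-2*((l+1:ℕ):ℤ)-1)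
      = (∑ j ∈ range (l+1), (P j + W j)) + Q 0 := by
    rw [Finset.sum_range_succ']
    congr 1
    · refine Finset.sum_congr rfl fun j _ => ?_
      simp only [hP, hW]
      rw [acoef,
        show (((j+1:ℕ)):ℤ)-2*((l+1:ℕ):ℤ)-1 = (j:ℤ)-2*(l:ℤ)-2 by push_cast; ring]
      ring
    · simp only [hQ]
      rw [acoef,
        show (((0:ℕ)):ℤ)-2*((l+1:ℕ):ℤ)-1 = ((0:ℕ):ℤ)-2*(l:ℤ)-3 by push_cast; ring]
      push_cast
      ring
  rw [hLHS, hRHS, Finset.sum_add_distrib, Finset.sum_add_distrib, add_assoc]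
  congr 1
  rw [Finset.sum_range_succ' Q l, Finset.sum_range_succ W l]
  have hWl : W l = 0 := by
    simp only [hW]
    rw [acoef_vanish l (l+1) (by omega)]
    ring
  rw [hWl, add_zero]
  congr 1
  refine Finset.sum_congr rfl fun j _ => ?_
  simp only [hQ, hW]
  rw [show (((j+1:ℕ)):ℤ)-2*(l:ℤ)-3 = (j:ℤ)-2*(l:ℤ)-2 by push_cast; ring]
  push_cast
  ring

lemma iter_formula (c : ℂ) (l : ℕ) : ∀ r ∈ Set.Ioi (0:ℝ),
    ((fun f : ℝ → ℂ => fun r => (r:ℂ)⁻¹ * deriv f r)^[l] (fun r : ℝ => Complex.exp (c*r) / r)) r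
      = Complex.exp (c*r) * ∑ j ∈ range (l+1), acoef l j * c^j * (r:ℂ)^((j:ℤ)-2*(l:ℤ)-1) := by
  induction l with
  | zero =>
    intro r hr
    have hr0 : (r:ℂ) ≠ 0 := by exact_mod_cast (ne_of_gt hr)
    simp only [Function.iterate_zero, id_eq]
    rw [Finset.sum_range_one, show acoef 0 0 = 1 from rfl]
    simp only [pow_zero, Nat.cast_zero]
    rw [show (0:ℤ)-2*(0:ℤ)-1 = -1 by ring, zpow_neg_one]
    field_simp
  | succ l ih =>
    intro r hr
    have hr0 : r ≠ 0 := ne_of_gt hr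
    have hrC : (r:ℂ) ≠ 0 := by exact_mod_cast hr0
    rw [Function.iterate_succ_apply']
    show (r:ℂ)⁻¹ * deriv ((fun f : ℝ → ℂ => fun r => (r:ℂ)⁻¹ * deriv f r)^[l]
      (fun r : ℝ => Complex.exp (c*r) / r)) r = _
    have hev : deriv ((fun f : ℝ → ℂ => fun r => (r:ℂ)⁻¹ * deriv f r)^[l]
        (fun r : ℝ => Complex.exp (c*r) / r)) r
        = deriv (fun r : ℝ => Complex.exp (c*r) *
            ∑ j ∈ range (l+1), acoef l j * c^j * (r:ℂ)^((j:ℤ)-2*(l:ℤ)-1)) r :=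
      Filter.EventuallyEq.deriv_eq (Filter.eventuallyEq_of_mem (isOpen_Ioi.mem_nhds hr) ih)
    rw [hev, (hasDerivAt_expsum c (l+1) (fun j => acoef l j * c^j)
      (fun j => (j:ℤ)-2*(l:ℤ)-1) hr0).deriv]
    rw [mul_left_comm]
    congr 1
    exact stepA c hrC l

/-! ### Step B : the eigenvalue equation for `G` -/

noncomputable def Gf (c : ℂ) (l : ℕ) : ℝ → ℂ := fun x =>
  Complex.exp (c*x) * ∑ j ∈ range (l+1), acoef l j * c^j * (x:ℂ)^((j:ℤ)-(l:ℤ))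

noncomputable def D1f (c : ℂ) (l : ℕ) : ℝ → ℂ := fun x =>
  Complex.exp (c*x) * ∑ j ∈ range (l+1),
    ((acoef l j * c^j * c) * (x:ℂ)^((j:ℤ)-(l:ℤ))
      + (acoef l j * c^j * (((j:ℤ)-(l:ℤ) : ℤ):ℂ)) * (x:ℂ)^((j:ℤ)-(l:ℤ)-1))

noncomputable def D2v (c : ℂ) (l : ℕ) : ℝ → ℂ := fun x =>
  Complex.exp (c*x) * ∑ j ∈ range (l+1),
    ((acoef l j * c^j * c) * (c * (x:ℂ)^((j:ℤ)-(l:ℤ))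
        + (((j:ℤ)-(l:ℤ) : ℤ):ℂ) * (x:ℂ)^((j:ℤ)-(l:ℤ)-1))
      + (acoef l j * c^j * (((j:ℤ)-(l:ℤ) : ℤ):ℂ)) * (c * (x:ℂ)^((j:ℤ)-(l:ℤ)-1)
        + (((j:ℤ)-(l:ℤ)-1 : ℤ):ℂ) * (x:ℂ)^((j:ℤ)-(l:ℤ)-1-1)))

lemma hasDerivAt_Gf (c : ℂ) (l : ℕ) {x : ℝ} (hx : x ≠ 0) :
    HasDerivAt (Gf c l) (D1f c l x) x := by
  have h := hasDerivAt_expsum c (l+1) (fun j => acoef l j * c^j) (fun j => (j:ℤ)-(l:ℤ)) hx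
  have hval : Complex.exp (c*x) * ∑ j ∈ range (l+1),
      (fun j => acoef l j * c^j) j * (c * (x:ℂ)^((j:ℤ)-(l:ℤ))
        + ((((j:ℤ)-(l:ℤ)) : ℤ):ℂ) * (x:ℂ)^(((j:ℤ)-(l:ℤ)) - 1)) = D1f c l x := by
    unfold D1f
    congr 1
    exact Finset.sum_congr rfl fun j _ => by ring
  rw [← hval]
  exact h

lemma hasDerivAt_D1f (c : ℂ) (l : ℕ) {x : ℝ} (hx : x ≠ 0) :
    HasDerivAt (D1f c l) (D2v c l x) x := by
  have h := hasDerivAt_expsum2 c (l+1)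
    (fun j => acoef l j * c^j * c)
    (fun j => acoef l j * c^j * (((j:ℤ)-(l:ℤ) : ℤ):ℂ))
    (fun j => (j:ℤ)-(l:ℤ)) (fun j => (j:ℤ)-(l:ℤ)-1) hx
  exact h

lemma stepB (c : ℂ) (l : ℕ) {R : ℂ} (hR : R ≠ 0) :
    ∑ j ∈ range (l+1),
      ((acoef l j * c^j * c) * (c * R^((j:ℤ)-(l:ℤ))
          + (((j:ℤ)-(l:ℤ) : ℤ):ℂ) * R^((j:ℤ)-(l:ℤ)-1))
        + (acoef l j * c^j * (((j:ℤ)-(l:ℤ) : ℤ):ℂ)) * (c * R^((j:ℤ)-(l:ℤ)-1)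
          + (((j:ℤ)-(l:ℤ)-1 : ℤ):ℂ) * R^((j:ℤ)-(l:ℤ)-1-1)))
      = ((l:ℂ) * ((l:ℂ)+1) / R^2) * ∑ j ∈ range (l+1), acoef l j * c^j * R^((j:ℤ)-(l:ℤ))
        + c^2 * ∑ j ∈ range (l+1), acoef l j * c^j * R^((j:ℤ)-(l:ℤ)) := by
  set T1 : ℕ → ℂ := fun j => 2*((j:ℂ)-(l:ℂ)) * acoef l j * c^(j+1) * R^((j:ℤ)-(l:ℤ)-1) with hT1
  set T2 : ℕ → ℂ := fun j => (j:ℂ)*((j:ℂ)-2*(l:ℂ)-1) * acoef l j * c^j * R^((j:ℤ)-(l:ℤ)-1-1) with hT2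
  have hsum : ∑ j ∈ range (l+1), (T1 j + T2 j) = 0 := by
    rw [Finset.sum_add_distrib, Finset.sum_range_succ T1 l, Finset.sum_range_succ' T2 l]
    have hT1l : T1 l = 0 := by simp only [hT1]; rw [sub_self]; ring
    have hT20 : T2 0 = 0 := by simp only [hT2]; rw [Nat.cast_zero]; ring
    rw [hT1l, hT20, add_zero, add_zero, ← Finset.sum_add_distrib]
    refine Finset.sum_eq_zero fun j _ => ?_
    simp only [hT1, hT2]
    rw [show (((j+1:ℕ)):ℤ)-(l:ℤ)-1-1 = (j:ℤ)-(l:ℤ)-1 by push_cast; ring]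
    push_cast
    linear_combination (c^(j+1) * R^((j:ℤ)-(l:ℤ)-1)) * acoef_rel l j
  have key : ∀ j ∈ range (l+1),
      (acoef l j * c^j * c) * (c * R^((j:ℤ)-(l:ℤ))
          + (((j:ℤ)-(l:ℤ) : ℤ):ℂ) * R^((j:ℤ)-(l:ℤ)-1))
        + (acoef l j * c^j * (((j:ℤ)-(l:ℤ) : ℤ):ℂ)) * (c * R^((j:ℤ)-(l:ℤ)-1)
          + (((j:ℤ)-(l:ℤ)-1 : ℤ):ℂ) * R^((j:ℤ)-(l:ℤ)-1-1))
      = (((l:ℂ) * ((l:ℂ)+1) / R^2) * (acoef l j * c^j * R^((j:ℤ)-(l:ℤ)))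
          + c^2 * (acoef l j * c^j * R^((j:ℤ)-(l:ℤ))))
        + (T1 j + T2 j) := by
    intro j _
    simp only [hT1, hT2]
    have hX : R^((j:ℤ)-(l:ℤ)) = R^((j:ℤ)-(l:ℤ)-1-1) * R^(2:ℕ) := by
      rw [← zpow_natCast R 2, ← zpow_add₀ hR]
      congr 1
      ring
    rw [hX]
    push_cast
    field_simp
    ring
  rw [Finset.sum_congr rfl key, Finset.sum_add_distrib, hsum, add_zero,
    Finset.sum_add_distrib, ← Finset.mul_sum, ← Finset.mul_sum]

lemma Dop_eq_Gf (c : ℂ) (l : ℕ) :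
    Set.EqOn (Dop l (fun s : ℝ => Complex.exp (c * s))) (Gf c l) (Set.Ioi 0) := by
  intro x hx
  have hx0 : (x:ℂ) ≠ 0 := by exact_mod_cast (ne_of_gt hx)
  have hI := iter_formula c l x hx
  show (x:ℂ)^(l+1) * ((fun f : ℝ → ℂ => fun r => (r:ℂ)⁻¹ * deriv f r)^[l]
      (fun r : ℝ => Complex.exp (c*r) / r)) x = Gf c l x
  rw [hI]
  simp only [Gf]
  rw [mul_left_comm]
  congr 1
  rw [Finset.mul_sum]
  refine Finset.sum_congr rfl fun j _ => ?_
  rw [show (j:ℤ)-(l:ℤ) = ((l+1:ℕ):ℤ) + ((j:ℤ)-2*(l:ℤ)-1) by push_cast; ring,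
    zpow_add₀ hx0, zpow_natCast]
  ring

lemma eigenOn (c : ℂ) (l : ℕ) :
    Set.EqOn (Tl l (Dop l (fun s : ℝ => Complex.exp (c * s))))
      (fun r => (-c^2) * Dop l (fun s : ℝ => Complex.exp (c * s)) r) (Set.Ioi 0) := by
  intro r hr
  have hr0 : r ≠ 0 := ne_of_gt hr
  have hrC : (r:ℂ) ≠ 0 := by exact_mod_cast hr0
  have hG := Dop_eq_Gf c l
  have hd' : Set.EqOn (deriv (Dop l (fun s : ℝ => Complex.exp (c * s)))) (D1f c l)
      (Set.Ioi 0) := by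
    intro x hx
    rw [Filter.EventuallyEq.deriv_eq (Filter.eventuallyEq_of_mem (isOpen_Ioi.mem_nhds hx) hG)]
    exact (hasDerivAt_Gf c l (ne_of_gt hx)).deriv
  have hdd : deriv (deriv (Dop l (fun s : ℝ => Complex.exp (c * s)))) r = D2v c l r := by
    rw [Filter.EventuallyEq.deriv_eq (Filter.eventuallyEq_of_mem (isOpen_Ioi.mem_nhds hr) hd')]
    exact (hasDerivAt_D1f c l hr0).deriv
  show -(deriv (deriv (Dop l (fun s : ℝ => Complex.exp (c * s)))) r)
      + ((l : ℂ) * (l + 1) / (r : ℂ) ^ 2) * (Dop l (fun s : ℝ => Complex.exp (c * s))) r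
    = (-c^2) * Dop l (fun s : ℝ => Complex.exp (c * s)) r
  rw [hdd, hG hr]
  simp only [D2v, Gf]
  rw [stepB c l hrC]
  ring

lemma Tl_congr (l : ℕ) {u v : ℝ → ℂ} (h : Set.EqOn u v (Set.Ioi 0)) :
    Set.EqOn (Tl l u) (Tl l v) (Set.Ioi 0) := by
  have hd : Set.EqOn (deriv u) (deriv v) (Set.Ioi 0) := fun x hx =>
    Filter.EventuallyEq.deriv_eq (Filter.eventuallyEq_of_mem (isOpen_Ioi.mem_nhds hx) h)
  intro x hx
  have hdd : deriv (deriv u) x = deriv (deriv v) x :=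
    Filter.EventuallyEq.deriv_eq (Filter.eventuallyEq_of_mem (isOpen_Ioi.mem_nhds hx) hd)
  unfold Tl
  rw [hdd, h hx]

lemma Tl_const_mul (l : ℕ) (μ : ℂ) (u : ℝ → ℂ) (x : ℝ) :
    Tl l (fun y => μ * u y) x = μ * Tl l u x := by
  unfold Tl
  rw [show deriv (fun y => μ * u y) = fun y => μ * deriv u y from
    funext fun y => deriv_const_mul_field μ, deriv_const_mul_field]
  ring

/-- For `k = 0,…,5`, `u = D_l exp(i e^{iπk/3} z r)` satisfies `(T_l)³ u = z⁶ u` on `(0,∞)`. -/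
theorem sixth_order_eigen (l : ℕ) (hl : 1 ≤ l) (z : ℂ) (k : ℕ) (hk : k ≤ 5) :
    ∀ r ∈ Set.Ioi (0 : ℝ),
      (Tl l)^[3] (Dop l (fun s : ℝ =>
          Complex.exp (Complex.I * Complex.exp (Complex.I * Real.pi * k / 3) * z * s))) r
        = z ^ 6 * Dop l (fun s : ℝ =>
            Complex.exp (Complex.I * Complex.exp (Complex.I * Real.pi * k / 3) * z * s)) r := by
  intro r hr
  set c : ℂ := Complex.I * Complex.exp (Complex.I * Real.pi * k / 3) * z with hc
  have hw : (fun s : ℝ => Complex.exp (Complex.I * Complex.exp (Complex.I * Real.pi * k / 3) * z * s))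
      = fun s : ℝ => Complex.exp (c * s) := by rw [hc]
  rw [hw]
  have E1 := eigenOn c l
  set u : ℝ → ℂ := Dop l (fun s : ℝ => Complex.exp (c * s)) with hu
  have E2 : Set.EqOn (Tl l (Tl l u)) (fun r => (-c^2)^2 * u r) (Set.Ioi 0) := by
    intro x hx
    rw [Tl_congr l E1 hx, Tl_const_mul, E1 hx]
    ring
  have E3 : Set.EqOn (Tl l (Tl l (Tl l u))) (fun r => (-c^2)^3 * u r) (Set.Ioi 0) := by
    intro x hx
    rw [Tl_congr l E2 hx, Tl_const_mul, E1 hx]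
    ring
  have h3 : (Tl l)^[3] u = Tl l (Tl l (Tl l u)) := rfl
  rw [h3, E3 hr]
  have hE6 : Complex.exp (Complex.I * Real.pi * k / 3) ^ 6 = 1 := by
    rw [← Complex.exp_nat_mul]
    rw [show ((6:ℕ):ℂ) * (Complex.I * Real.pi * k / 3) = (k : ℤ) * (2 * Real.pi * Complex.I) by
      push_cast; ring]
    exact Complex.exp_int_mul_two_pi_mul_I k
  have hc6 : (-c^2)^3 = z^6 := by
    rw [hc]
    have : (Complex.I * Complex.exp (Complex.I * Real.pi * k / 3) * z)^6
        = Complex.I^6 * Complex.exp (Complex.I * Real.pi * k / 3)^6 * z^6 := by ring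
    have hI6 : Complex.I^6 = -1 := by
      rw [show (6:ℕ) = 2*3 from rfl, pow_mul, Complex.I_sq]
      norm_num
    calc (-(Complex.I * Complex.exp (Complex.I * Real.pi * k / 3) * z)^2)^3
        = -(Complex.I^6 * Complex.exp (Complex.I * Real.pi * k / 3)^6 * z^6) := by ring
      _ = z^6 := by rw [hI6, hE6]; ring
  rw [hc6]
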